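/- arXiv:2407.02619 — 2 statements merged into one kernel-verified Lean document; each statement's English description precedes it below -/
import Mathlib

section
/- The map a ↦ sgn(a)·|a|_K from an ordered field K with compatible non-Archimedean absolute value |·|_K to the real tropical hyperfield ℝ𝕋 is a hyperfield homomorphism; in particular for all a, b ∈ K, sgn(a+b)·|a+b|_K lies in the hyperaddition sgn(a)|a|_K ⊕ sgn(b)|b|_K of ℝ𝕋. -/
noncomputable section

/-- The sign of an element of a linear ordered field, as a real number. -/
def sgn {K : Type*} [Field K] [LinearOrder K] [IsStrictOrderedRing K] (x : K) : ℝ :=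
  if 0 < x then 1 else if x < 0 then -1 else 0

/-- Hyperaddition in the real tropical hyperfield `ℝ𝕋`. -/
def rtAdd (a b : ℝ) : Set ℝ :=
  if |b| < |a| then {a}
  else if |a| < |b| then {b}
  else if a = b then {a}
  else Set.Icc (min a b) (max a b)

/-- `av` is a non-Archimedean absolute value. -/
def IsNonarch {K : Type*} [Field K] [LinearOrder K] [IsStrictOrderedRing K] (av : AbsoluteValue K ℝ) : Prop :=
  ∀ x y : K, av (x + y) ≤ max (av x) (av y)

/-- `av` is compatible with the order on `K`: `0 ≤ a ≤ b` implies `av a ≤ av b`. -/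
def Compat {K : Type*} [Field K] [LinearOrder K] [IsStrictOrderedRing K] (av : AbsoluteValue K ℝ) : Prop :=
  ∀ x y : K, 0 ≤ x → x ≤ y → av x ≤ av y

section Aux

variable {K : Type*} [Field K] [LinearOrder K] [IsStrictOrderedRing K]

lemma sgn_of_pos {x : K} (h : 0 < x) : sgn x = 1 := by simp [sgn, h]

lemma sgn_of_neg {x : K} (h : x < 0) : sgn x = -1 := by
  simp [sgn, h, not_lt.mpr h.le]

lemma sgn_zero' : sgn (0 : K) = 0 := by simp [sgn]

lemma abs_sgn {x : K} (h : x ≠ 0) : |sgn x| = 1 := by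
  rcases h.lt_or_gt with h | h
  · rw [sgn_of_neg h]; norm_num
  · rw [sgn_of_pos h]; norm_num

lemma abs_signed (av : AbsoluteValue K ℝ) {x : K} (h : x ≠ 0) :
    |sgn x * av x| = av x := by
  rw [abs_mul, abs_sgn h, one_mul, abs_of_nonneg (av.nonneg x)]

lemma abs_signed_le (av : AbsoluteValue K ℝ) (x : K) :
    |sgn x * av x| ≤ av x := by
  by_cases h : x = 0
  · subst h; simp [sgn_zero', av.nonneg]
  · rw [abs_signed av h]

/-- Dominance: if `av b < av a` then `a + b` has the same `av` and sign as `a`. -/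
lemma dominance (av : AbsoluteValue K ℝ) (hna : IsNonarch av) (hcomp : Compat av)
    {a b : K} (h : av b < av a) :
    av (a + b) = av a ∧ sgn (a + b) = sgn a := by
  have ha0 : a ≠ 0 := by
    rintro rfl
    rw [av.map_zero] at h
    exact absurd h (av.nonneg b).not_gt
  have hle : av (a + b) ≤ av a := (hna a b).trans_eq (max_eq_left h.le)
  have hge : av a ≤ av (a + b) := by
    by_contra hc
    push_neg at hc
    have h2 : av a ≤ max (av (a + b)) (av (-b)) := by
      have := hna (a + b) (-b); rwa [add_neg_cancel_right] at this
    rw [av.map_neg] at h2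
    have := max_lt hc h
    linarith
  refine ⟨le_antisymm hle hge, ?_⟩
  rcases ha0.lt_or_gt with hneg | hpos
  · have hab : a + b < 0 := by
      by_contra hc
      push_neg at hc
      have := hcomp (-a) b (by linarith) (by linarith)
      rw [av.map_neg] at this
      exact absurd h this.not_gt
    rw [sgn_of_neg hab, sgn_of_neg hneg]
  · have hab : 0 < a + b := by
      by_contra hc
      push_neg at hc
      have := hcomp a (-b) hpos.le (by linarith)
      rw [av.map_neg] at this
      exact absurd h this.not_gt
    rw [sgn_of_pos hab, sgn_of_pos hpos]

lemma mem_rtAdd_opp {c x : ℝ} (hc : c ≠ 0) (hx : |x| ≤ |c|) : x ∈ rtAdd c (-c) := by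
  unfold rtAdd
  have h3 : c ≠ -c := by intro h; apply hc; linarith
  rw [if_neg (by simp), if_neg (by simp), if_neg h3]
  rcases abs_le.mp hx with ⟨hl, hr⟩
  rcases le_total 0 c with h | h
  · rw [abs_of_nonneg h] at hl hr
    rw [min_eq_right (by linarith : -c ≤ c), max_eq_left (by linarith : -c ≤ c)]
    exact ⟨hl, hr⟩
  · rw [abs_of_nonpos h] at hl hr
    rw [min_eq_left (by linarith : c ≤ -c), max_eq_right (by linarith : c ≤ -c)]
    exact ⟨by linarith, by linarith⟩

lemma mem_rtAdd_opp' {c x : ℝ} (hc : c ≠ 0) (hx : |x| ≤ |c|) : x ∈ rtAdd (-c) c := by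
  unfold rtAdd
  have h3 : -c ≠ c := by intro h; apply hc; linarith
  rw [if_neg (by simp), if_neg (by simp), if_neg h3]
  rcases abs_le.mp hx with ⟨hl, hr⟩
  rcases le_total 0 c with h | h
  · rw [abs_of_nonneg h] at hl hr
    rw [min_eq_left (by linarith : -c ≤ c), max_eq_right (by linarith : -c ≤ c)]
    exact ⟨hl, hr⟩
  · rw [abs_of_nonpos h] at hl hr
    rw [min_eq_right (by linarith : c ≤ -c), max_eq_left (by linarith : c ≤ -c)]
    exact ⟨by linarith, by linarith⟩

end Aux

/-- The signed absolute value `a ↦ sgn(a)·|a|` is a hyperfield homomorphism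
from an ordered field with compatible non-Archimedean absolute value to `ℝ𝕋`. -/
theorem signedAbs_hyperfield_hom {K : Type*} [Field K] [LinearOrder K] [IsStrictOrderedRing K]
    (av : AbsoluteValue K ℝ) (hna : IsNonarch av) (hcomp : Compat av) :
    sgn (0 : K) * av 0 = 0 ∧
    sgn (1 : K) * av 1 = 1 ∧
    (∀ a b : K, sgn (a * b) * av (a * b) = (sgn a * av a) * (sgn b * av b)) ∧
    (∀ a b : K, sgn (a + b) * av (a + b) ∈ rtAdd (sgn a * av a) (sgn b * av b)) := by
  refine ⟨by simp [sgn_zero'], by simp [sgn_of_pos one_pos], ?_, ?_⟩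
  · intro a b
    rw [av.map_mul]
    rcases lt_trichotomy a 0 with ha | ha | ha <;>
      rcases lt_trichotomy b 0 with hb | hb | hb
    · rw [sgn_of_pos (mul_pos_of_neg_of_neg ha hb), sgn_of_neg ha, sgn_of_neg hb]; ring
    · subst hb; simp [sgn_zero']
    · rw [sgn_of_neg (mul_neg_of_neg_of_pos ha hb), sgn_of_neg ha, sgn_of_pos hb]; ring
    · subst ha; simp [sgn_zero']
    · subst ha; simp [sgn_zero']
    · subst ha; simp [sgn_zero']
    · rw [sgn_of_neg (mul_neg_of_pos_of_neg ha hb), sgn_of_pos ha, sgn_of_neg hb]; ring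
    · subst hb; simp [sgn_zero']
    · rw [sgn_of_pos (mul_pos ha hb), sgn_of_pos ha, sgn_of_pos hb]; ring
  · intro a b
    rcases lt_trichotomy (av b) (av a) with h | h | h
    · -- a dominates
      obtain ⟨he, hs⟩ := dominance av hna hcomp h
      have ha0 : a ≠ 0 := by
        rintro rfl
        rw [av.map_zero] at h
        exact absurd h (av.nonneg b).not_gt
      have hcond : |sgn b * av b| < |sgn a * av a| := by
        calc |sgn b * av b| ≤ av b := abs_signed_le av b
          _ < av a := h
          _ = |sgn a * av a| := (abs_signed av ha0).symm
      rw [rtAdd, if_pos hcond, hs, he]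
      exact rfl
    · -- equal absolute values
      by_cases ha0 : a = 0
      · subst ha0
        rw [av.map_zero] at h
        have hb0 : b = 0 := av.eq_zero.mp h
        subst hb0
        simp only [add_zero, sgn_zero', zero_mul, av.map_zero, mul_zero]
        rw [rtAdd]
        simp
      · have hapos : 0 < av a := av.pos ha0
        have hb0 : b ≠ 0 := by
          intro hb; rw [hb, av.map_zero] at h; linarith
        have habs : av (a + b) ≤ av a := (hna a b).trans (by rw [h, max_self])
        rcases Ne.lt_or_gt ha0 with haneg | hapos' <;> rcases hb0.lt_or_gt with hbneg | hbpos
        · -- both negative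
          have hab : a + b < 0 := by linarith
          have hge : av a ≤ av (a + b) := by
            have := hcomp (-a) (-(a + b)) (by linarith) (by linarith)
            rwa [av.map_neg, av.map_neg] at this
          rw [sgn_of_neg hab, sgn_of_neg haneg, sgn_of_neg hbneg, le_antisymm habs hge, ← h]
          rw [rtAdd]
          rw [if_neg (by rw [h]; exact lt_irrefl _), if_neg (by rw [h]; exact lt_irrefl _),
            if_pos (by rw [h])]
          exact rfl
        · -- a < 0 < b : opposite signs
          rw [sgn_of_neg haneg, sgn_of_pos hbpos, one_mul, neg_one_mul, ← h]
          refine mem_rtAdd_opp' (av.pos hb0).ne' ?_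
          calc |sgn (a + b) * av (a + b)| ≤ av (a + b) := abs_signed_le av _
            _ ≤ av b := (hna a b).trans (by rw [h, max_self])
            _ = |av b| := (abs_of_nonneg (av.nonneg b)).symm
        · -- b < 0 < a : opposite signs
          rw [sgn_of_pos hapos', sgn_of_neg hbneg, one_mul, neg_one_mul, h]
          refine mem_rtAdd_opp hapos.ne' ?_
          calc |sgn (a + b) * av (a + b)| ≤ av (a + b) := abs_signed_le av _
            _ ≤ av a := habs
            _ = |av a| := (abs_of_nonneg (av.nonneg a)).symm
        · -- both positive
          have hab : 0 < a + b := by linarith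
          have hge : av a ≤ av (a + b) := hcomp a (a + b) hapos'.le (by linarith)
          rw [sgn_of_pos hab, sgn_of_pos hapos', sgn_of_pos hbpos, le_antisymm habs hge, ← h]
          rw [rtAdd]
          rw [if_neg (by rw [h]; exact lt_irrefl _), if_neg (by rw [h]; exact lt_irrefl _),
            if_pos (by rw [h])]
          exact rfl
    · -- b dominates
      have hcomm : a + b = b + a := add_comm a b
      obtain ⟨he, hs⟩ := dominance av hna hcomp h
      have hb0 : b ≠ 0 := by
        rintro rfl
        rw [av.map_zero] at h
        exact absurd h (av.nonneg a).not_gt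
      have hcond1 : ¬ |sgn b * av b| < |sgn a * av a| := by
        rw [abs_signed av hb0]
        exact not_lt.mpr ((abs_signed_le av a).trans h.le)
      have hcond2 : |sgn a * av a| < |sgn b * av b| := by
        calc |sgn a * av a| ≤ av a := abs_signed_le av a
          _ < av b := h
          _ = |sgn b * av b| := (abs_signed av hb0).symm
      rw [rtAdd, if_neg hcond1, if_pos hcond2, hcomm, hs, he]
      exact rfl
end
end

section
/- The covector poset of the universal realizable oriented matroid M_univ on E = (ℝ^{n+1})^* satisfies covector elimination: for all covectors X, Y and e ∈ S(X,Y) (the separation set where X(e) = −Y(e) ≠ 0), there exists a covector Z with Z(e) = 0 and Z(e') = (X∘Y)(e') for all e' ∉ S(X,Y). -/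
noncomputable section

variable {E : Type*} [DecidableEq E] {n : ℕ}

/-- A chirotope of rank `n+1` on the ground set `E`: a nonzero alternating map
`(Fin (n+1) → E) → {0,±1}` satisfying the Grassmann–Plücker relations over the
sign hyperfield. -/
def IsChirotope (φ : (Fin (n + 1) → E) → ℝ) : Prop :=
  (∃ b, φ b ≠ 0) ∧
  (∀ b, φ b = 0 ∨ φ b = 1 ∨ φ b = -1) ∧
  (∀ (b : Fin (n + 1) → E) (σ : Equiv.Perm (Fin (n + 1))),
    φ (b ∘ σ) = ((Equiv.Perm.sign σ : ℤ) : ℝ) * φ b) ∧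
  (∀ (b : Fin (n + 1) → E) (i j : Fin (n + 1)), i ≠ j → b i = b j → φ b = 0) ∧
  (∀ (x : Fin (n + 2) → E) (y : Fin n → E),
    (∀ k : Fin (n + 2), ((-1 : ℝ) ^ (k : ℕ)) * φ (x ∘ k.succAbove) * φ (Fin.cons (x k) y) = 0) ∨
    (∃ k l : Fin (n + 2),
      0 < ((-1 : ℝ) ^ (k : ℕ)) * φ (x ∘ k.succAbove) * φ (Fin.cons (x k) y) ∧
      ((-1 : ℝ) ^ (l : ℕ)) * φ (x ∘ l.succAbove) * φ (Fin.cons (x l) y) < 0))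

/-- Composition of signed sets. -/
def scomp (X Y : E → ℝ) : E → ℝ := fun e => if X e ≠ 0 then X e else Y e

/-- A cocircuit of the oriented matroid with chirotope `φ`. -/
def IsCocircuit (φ : (Fin (n + 1) → E) → ℝ) (X : E → ℝ) : Prop :=
  X ≠ 0 ∧ ∃ (ε : ℝ) (μ : Fin n → E), (ε = 1 ∨ ε = -1) ∧ ∀ e, X e = ε * φ (Fin.cons e μ)

/-- Covectors: finite compositions of cocircuits (the empty composition is `0`). -/
inductive IsCovector (φ : (Fin (n + 1) → E) → ℝ) : (E → ℝ) → Prop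
  | zero : IsCovector φ 0
  | cocirc (X : E → ℝ) : IsCocircuit φ X → IsCovector φ X
  | comp (X Y : E → ℝ) : IsCocircuit φ X → IsCovector φ Y → IsCovector φ (scomp X Y)

/-- The partial order on signed sets: `X ≤ Y` iff `Y` agrees with `X` on the
support of `X`. -/
def sle (X Y : E → ℝ) : Prop := ∀ e, X e ≠ 0 → Y e = X e

/-- A finite set is independent iff it is contained in (the range of) a basis. -/
def Indep (φ : (Fin (n + 1) → E) → ℝ) (S : Finset E) : Prop :=
  ∃ b : Fin (n + 1) → E, φ b ≠ 0 ∧ (S : Set E) ⊆ Set.range b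

/-- Flats of the underlying matroid: sets closed under the closure operator. -/
def IsFlat (φ : (Fin (n + 1) → E) → ℝ) (F : Set E) : Prop :=
  ∀ e : E, (∃ S : Finset E, (S : Set E) ⊆ F ∧ Indep φ S ∧ ¬ Indep φ (insert e S)) → e ∈ F

/-- The sign of a real number (as a real number). -/
def sgnR (x : ℝ) : ℝ := if 0 < x then 1 else if x < 0 then -1 else 0

/-- The chirotope of the universal realizable oriented matroid on
`E = (ℝ^{n+1})^*`. -/
def phiUniv (n : ℕ) (b : Fin (n + 1) → Module.Dual ℝ (Fin (n + 1) → ℝ)) : ℝ :=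
  sgnR ((Matrix.of fun i j => b i (Pi.single j 1)).det)




@[simp] lemma sgnR_zero : sgnR 0 = 0 := by simp [sgnR]

lemma sgnR_eq_one_iff {x : ℝ} : sgnR x = 1 ↔ 0 < x := by
  unfold sgnR; split_ifs <;> norm_num <;> first | assumption | linarith

lemma sgnR_eq_neg_one_iff {x : ℝ} : sgnR x = -1 ↔ x < 0 := by
  unfold sgnR; split_ifs <;> norm_num <;> first | assumption | linarith

lemma sgnR_eq_zero_iff {x : ℝ} : sgnR x = 0 ↔ x = 0 := by
  unfold sgnR; split_ifs with h1 h2 <;> norm_num <;> first | linarith | (exact fun h => by linarith) | (intros; linarith)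

lemma sgnR_values (x : ℝ) : sgnR x = 0 ∨ sgnR x = 1 ∨ sgnR x = -1 := by
  unfold sgnR; split_ifs <;> norm_num

lemma sgnR_mul (x y : ℝ) : sgnR (x * y) = sgnR x * sgnR y := by
  rcases lt_trichotomy x 0 with hx | hx | hx <;> rcases lt_trichotomy y 0 with hy | hy | hy
  · rw [sgnR_eq_neg_one_iff.2 hx, sgnR_eq_neg_one_iff.2 hy, sgnR_eq_one_iff.2 (mul_pos_of_neg_of_neg hx hy)]; ring
  · simp [hy]
  · rw [sgnR_eq_neg_one_iff.2 hx, sgnR_eq_one_iff.2 hy, sgnR_eq_neg_one_iff.2 (mul_neg_of_neg_of_pos hx hy)]; ring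
  · simp [hx]
  · simp [hx]
  · simp [hx]
  · rw [sgnR_eq_one_iff.2 hx, sgnR_eq_neg_one_iff.2 hy, sgnR_eq_neg_one_iff.2 (mul_neg_of_pos_of_neg hx hy)]; ring
  · simp [hy]
  · rw [sgnR_eq_one_iff.2 hx, sgnR_eq_one_iff.2 hy, sgnR_eq_one_iff.2 (mul_pos hx hy)]; ring

lemma sgnR_of_pm {a : ℝ} (ha : a = 1 ∨ a = -1) : sgnR a = a := by
  rcases ha with h | h <;> norm_num [h, sgnR]

lemma sgnR_add_same {x y : ℝ} {s : ℝ} (hs : s = 1 ∨ s = -1)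
    (hx : sgnR x = s) (hy : sgnR y = s) : sgnR (x + y) = s := by
  rcases hs with h | h <;> subst h
  · rw [sgnR_eq_one_iff] at *; linarith
  · rw [sgnR_eq_neg_one_iff] at *; linarith



abbrev Vr (n : ℕ) := Fin (n + 1) → ℝ
abbrev Dr (n : ℕ) := Module.Dual ℝ (Vr n)

def covL : List (Vr n) → (Dr n → ℝ)
  | [] => 0
  | v :: L => scomp (fun f => sgnR (f v)) (covL L)

@[simp] lemma covL_nil (f : Dr n) : covL [] f = 0 := rfl

lemma covL_cons (v : Vr n) (L : List (Vr n)) (f : Dr n) :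
    covL (v :: L) f = if sgnR (f v) ≠ 0 then sgnR (f v) else covL L f := rfl

lemma covL_cons_ne (v : Vr n) (L : List (Vr n)) (f : Dr n) (h : f v ≠ 0) :
    covL (v :: L) f = sgnR (f v) := by
  rw [covL_cons, if_pos (by rwa [Ne, sgnR_eq_zero_iff])]

lemma covL_cons_eq (v : Vr n) (L : List (Vr n)) (f : Dr n) (h : f v = 0) :
    covL (v :: L) f = covL L f := by
  rw [covL_cons, if_neg (by simp [h])]

lemma covL_eq_zero_iff (L : List (Vr n)) (f : Dr n) :
    covL L f = 0 ↔ ∀ v ∈ L, f v = 0 := by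
  induction L with
  | nil => simp
  | cons v L ih =>
    by_cases h : f v = 0
    · rw [covL_cons_eq _ _ _ h]; simp [h, ih]
    · rw [covL_cons_ne _ _ _ h]
      simp only [List.mem_cons]
      constructor
      · intro h0; exact absurd (sgnR_eq_zero_iff.1 h0) h
      · intro hall; exact absurd (hall v (Or.inl rfl)) h

lemma covL_values (L : List (Vr n)) (f : Dr n) :
    covL L f = 0 ∨ covL L f = 1 ∨ covL L f = -1 := by
  induction L with
  | nil => simp
  | cons v L ih =>
    by_cases h : f v = 0
    · rw [covL_cons_eq _ _ _ h]; exact ih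
    · rw [covL_cons_ne _ _ _ h]; exact sgnR_values _

lemma covL_append (L1 L2 : List (Vr n)) (f : Dr n) :
    covL (L1 ++ L2) f = if covL L1 f ≠ 0 then covL L1 f else covL L2 f := by
  induction L1 with
  | nil => simp
  | cons v L ih =>
    by_cases h : f v = 0
    · rw [List.cons_append, covL_cons_eq _ _ _ h, covL_cons_eq _ _ _ h, ih]
    · rw [List.cons_append, covL_cons_ne _ _ _ h, covL_cons_ne _ _ _ h,
        if_pos (by rwa [Ne, sgnR_eq_zero_iff])]



lemma dual_apply_eq_sum (g : Dr n) (v : Vr n) :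
    g v = ∑ k, g (Pi.single k 1) * v k := by
  have h := LinearMap.pi_apply_eq_sum_univ (g : (Fin (n+1) → ℝ) →ₗ[ℝ] ℝ) v
  rw [h]
  refine Finset.sum_congr rfl fun k _ => ?_
  rw [smul_eq_mul, mul_comm]
  congr 2
  funext j
  simp [Pi.single_apply, eq_comm]

lemma sgnR_pm_of_ne {x : ℝ} (hx : x ≠ 0) : sgnR x = 1 ∨ sgnR x = -1 := by
  rcases sgnR_values x with h | h | h
  · exact absurd (sgnR_eq_zero_iff.1 h) hx
  · exact Or.inl h
  · exact Or.inr h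

lemma cocircuit_sgn (v : Vr n) (hv : v ≠ 0) :
    IsCocircuit (phiUniv n) (fun f : Dr n => sgnR (f v)) := by
  obtain ⟨p, hp⟩ : ∃ p, v p ≠ 0 := Function.ne_iff.1 hv
  constructor
  · intro h0
    have h1 := congrFun h0 (LinearMap.proj p : Dr n)
    simp only [LinearMap.proj_apply, Pi.zero_apply] at h1
    exact hp (sgnR_eq_zero_iff.1 h1)
  · set μ : Fin n → Dr n := fun i =>
      v p • (LinearMap.proj (p.succAbove i) : Dr n)
        - v (p.succAbove i) • (LinearMap.proj p : Dr n) with hμ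
    set K : ℝ := (-1 : ℝ) ^ (p : ℕ) * (v p) ^ n with hK
    have hKne : K ≠ 0 :=
      mul_ne_zero (pow_ne_zero _ (by norm_num)) (pow_ne_zero _ hp)
    have hs := sgnR_pm_of_ne hp
    have hKs := sgnR_pm_of_ne hKne
    refine ⟨sgnR (v p) * sgnR K, μ, ?_, ?_⟩
    · rcases hs with h | h <;> rcases hKs with h2 | h2 <;> rw [h, h2] <;> norm_num
    · intro e
      set M : Matrix (Fin (n+1)) (Fin (n+1)) ℝ :=
        Matrix.of fun i j => (Fin.cons e μ : Fin (n+1) → Dr n) i (Pi.single j 1) with hM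
      set T : Matrix (Fin (n+1)) (Fin (n+1)) ℝ := (1 : Matrix _ _ ℝ).updateCol p v with hT
      have hTdet : T.det = v p := by
        have h1 := Matrix.cramer_one (n := Fin (n+1)) (α := ℝ)
        have h2 := congrFun (congrFun (congrArg DFunLike.coe h1) v) p
        rw [Matrix.cramer_apply] at h2
        rw [hT]
        simpa using h2
      set c : Fin (n+1) → ℝ := fun i => if i = 0 then e v else 0 with hc
      have hMT : M * T = M.updateCol p c := by
        ext i j
        rw [Matrix.mul_apply, Matrix.updateCol_apply]
        by_cases hj : j = p
        · rw [if_pos hj, hj]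
          have hTk : ∀ k, T k p = v k := fun k => by
            rw [hT, Matrix.updateCol_apply, if_pos rfl]
          calc ∑ k, M i k * T k p
              = ∑ k, (Fin.cons e μ : Fin (n+1) → Dr n) i (Pi.single k 1) * v k := by
                refine Finset.sum_congr rfl fun k _ => ?_
                rw [hTk k, hM]
                rfl
            _ = (Fin.cons e μ : Fin (n+1) → Dr n) i v := (dual_apply_eq_sum _ _).symm
            _ = c i := by
                induction i using Fin.cases with
                | zero => simp [hc]
                | succ i' =>
                  simp only [Fin.cons_succ, hμ, hc, if_neg (Fin.succ_ne_zero i'),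
                    LinearMap.sub_apply, LinearMap.smul_apply, LinearMap.proj_apply,
                    smul_eq_mul]
                  ring
        · rw [if_neg hj]
          have hTk : ∀ k, T k j = (1 : Matrix (Fin (n+1)) (Fin (n+1)) ℝ) k j := fun k => by
            rw [hT, Matrix.updateCol_apply, if_neg hj]
          rw [Finset.sum_congr rfl (fun k _ => by rw [hTk k])]
          rw [← Matrix.mul_apply, Matrix.mul_one]
      have hdet2 : (M.updateCol p c).det = (-1 : ℝ) ^ (p : ℕ) * e v * (v p) ^ n := by
        rw [Matrix.det_succ_column _ p, Finset.sum_eq_single 0]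
        · have h0 : (M.updateCol p c) 0 p = e v := by
            rw [Matrix.updateCol_apply, if_pos rfl]; simp [hc]
          rw [h0]
          have hsub : ((M.updateCol p c).submatrix (Fin.succAbove 0) p.succAbove)
              = (v p) • (1 : Matrix (Fin n) (Fin n) ℝ) := by
            ext i j
            simp only [Matrix.submatrix_apply, Fin.succAbove_zero]
            rw [Matrix.updateCol_apply, if_neg (Fin.succAbove_ne p j)]
            rw [hM]
            simp only [Matrix.of_apply, Fin.cons_succ, hμ, LinearMap.sub_apply,
              LinearMap.smul_apply, LinearMap.proj_apply, smul_eq_mul,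
              Pi.single_apply, Matrix.smul_apply, Matrix.one_apply, smul_eq_mul]
            rw [if_neg (Ne.symm (Fin.succAbove_ne p j))]
            simp only [(Fin.succAbove_right_injective (p := p)).eq_iff]
            split_ifs <;> ring
          rw [hsub, Matrix.det_smul, Matrix.det_one, Fintype.card_fin]
          simp
        · intro i _ hi
          have h0 : (M.updateCol p c) i p = 0 := by
            rw [Matrix.updateCol_apply, if_pos rfl]; simp [hc, hi]
          rw [h0]; ring
        · intro h; exact absurd (Finset.mem_univ _) h
      have key : M.det * v p = e v * K := by
        calc M.det * v p = M.det * T.det := by rw [hTdet]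
          _ = (M * T).det := (Matrix.det_mul M T).symm
          _ = (M.updateCol p c).det := by rw [hMT]
          _ = (-1 : ℝ) ^ (p : ℕ) * e v * (v p) ^ n := hdet2
          _ = e v * K := by rw [hK]; ring
      have key2 : sgnR (M.det) * sgnR (v p) = sgnR (e v) * sgnR K := by
        rw [← sgnR_mul, ← sgnR_mul, key]
      show sgnR (e v) = sgnR (v p) * sgnR K * phiUniv n (Fin.cons e μ)
      have hphi : phiUniv n (Fin.cons e μ) = sgnR M.det := by rw [hM]; rfl
      rw [hphi]
      rcases hs with h | h <;> rcases hKs with h2 | h2 <;>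
        rw [h, h2] at key2 ⊢ <;> linarith


lemma covector_covL (L : List (Vr n)) : IsCovector (phiUniv n) (covL L) := by
  induction L with
  | nil => exact IsCovector.zero
  | cons v L ih =>
    by_cases hv : v = 0
    · have : covL (v :: L) = covL L := by
        funext f
        exact covL_cons_eq v L f (by rw [hv, map_zero])
      rw [this]; exact ih
    · exact IsCovector.comp _ _ (cocircuit_sgn v hv) ih

lemma cocircuit_repr {X : Dr n → ℝ} (h : IsCocircuit (phiUniv n) X) :
    ∃ v : Vr n, X = fun f => sgnR (f v) := by
  obtain ⟨-, ε, μ, hε, hXe⟩ := h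
  refine ⟨fun j => ε * ((-1 : ℝ) ^ (j : ℕ) *
    (Matrix.of fun i k => (μ i : Dr n) (Pi.single (j.succAbove k) 1) :
      Matrix (Fin n) (Fin n) ℝ).det), ?_⟩
  funext e
  rw [hXe e]
  set A : Matrix (Fin (n+1)) (Fin (n+1)) ℝ :=
    Matrix.of fun i j => (Fin.cons e μ : Fin (n+1) → Dr n) i (Pi.single j 1) with hA
  have hphi : phiUniv n (Fin.cons e μ) = sgnR A.det := by rw [hA]; rfl
  have hdet : A.det = ∑ j : Fin (n+1), (-1 : ℝ) ^ (j : ℕ) * e (Pi.single j 1) *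
      (Matrix.of fun i k => (μ i : Dr n) (Pi.single (j.succAbove k) 1) :
        Matrix (Fin n) (Fin n) ℝ).det := by
    rw [Matrix.det_succ_row_zero]
    refine Finset.sum_congr rfl fun j _ => ?_
    have h1 : A 0 j = e (Pi.single j 1) := by rw [hA]; rfl
    have h2 : A.submatrix Fin.succ j.succAbove
        = Matrix.of fun i k => (μ i : Dr n) (Pi.single (j.succAbove k) 1) := by
      ext i k
      rw [hA]
      simp [Fin.cons_succ]
    rw [h1, h2]
  have hev : e (fun j => ε * ((-1 : ℝ) ^ (j : ℕ) *
      (Matrix.of fun i k => (μ i : Dr n) (Pi.single (j.succAbove k) 1) :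
        Matrix (Fin n) (Fin n) ℝ).det)) = ε * A.det := by
    rw [dual_apply_eq_sum, hdet, Finset.mul_sum]
    refine Finset.sum_congr rfl fun j _ => ?_
    ring
  rw [hev, sgnR_mul, sgnR_of_pm hε, hphi]

lemma covector_repr {X : Dr n → ℝ} (h : IsCovector (phiUniv n) X) :
    ∃ L : List (Vr n), X = covL L := by
  induction h with
  | zero => exact ⟨[], rfl⟩
  | cocirc X hX =>
    obtain ⟨v, hv⟩ := cocircuit_repr hX
    refine ⟨[v], ?_⟩
    funext f
    rw [hv, covL_cons]
    by_cases h : sgnR (f v) = 0 <;> simp [h]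
  | comp X Y hX hY ih =>
    obtain ⟨v, hv⟩ := cocircuit_repr hX
    obtain ⟨L, hL⟩ := ih
    exact ⟨v :: L, by rw [hv, hL]; rfl⟩

lemma pm_eq_of_ne_neg {x y : ℝ} (hx : x = 1 ∨ x = -1) (hy : y = 1 ∨ y = -1)
    (h : x ≠ -y) : x = y := by
  rcases hx with h1 | h1 <;> rcases hy with h2 | h2
  · rw [h1, h2]
  · exact absurd (by rw [h1, h2]; try norm_num) h
  · exact absurd (by rw [h1, h2]; try norm_num) h
  · rw [h1, h2]

lemma covL_map_eval (f e : Dr n) (U : List (Vr n)) (t : ℝ) (g : Vr n → Vr n)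
    (hg : ∀ u ∈ U, f (g u) = e u * t) :
    covL (U.map g) f = covL U e * sgnR t := by
  induction U with
  | nil => simp
  | cons u U ih =>
    have hgu := hg u (List.mem_cons_self)
    have ih' := ih fun u hu => hg u (List.mem_cons_of_mem _ hu)
    by_cases heu : e u = 0
    · rw [List.map_cons, covL_cons_eq _ _ _ (by rw [hgu, heu, zero_mul]),
        covL_cons_eq _ _ _ heu, ih']
    · by_cases ht : t = 0
      · rw [List.map_cons, covL_cons_eq _ _ _ (by rw [hgu, ht, mul_zero]), ih', ht,
          sgnR_zero, mul_zero, mul_zero]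
      · rw [List.map_cons, covL_cons_ne _ _ _ (by rw [hgu]; exact mul_ne_zero heu ht),
          covL_cons_ne _ _ _ heu, hgu, sgnR_mul]

lemma covL_map_const (f : Dr n) (U : List (Vr n)) (c : ℝ) (g : Vr n → Vr n)
    (hg : ∀ u ∈ U, f (g u) = c * f u) :
    covL (U.map g) f = sgnR c * covL U f := by
  induction U with
  | nil => simp
  | cons u U ih =>
    have hgu := hg u (List.mem_cons_self)
    have ih' := ih fun u hu => hg u (List.mem_cons_of_mem _ hu)
    by_cases hfu : f u = 0
    · rw [List.map_cons, covL_cons_eq _ _ _ (by rw [hgu, hfu, mul_zero]),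
        covL_cons_eq _ _ _ hfu, ih']
    · by_cases hc : c = 0
      · rw [List.map_cons, covL_cons_eq _ _ _ (by rw [hgu, hc, zero_mul]), ih', hc,
          sgnR_zero, zero_mul, zero_mul]
      · rw [List.map_cons, covL_cons_ne _ _ _ (by rw [hgu]; exact mul_ne_zero hc hfu),
          covL_cons_ne _ _ _ hfu, hgu, sgnR_mul]

lemma covL_map_mix (f e : Dr n) (U : List (Vr n)) (g : Vr n → Vr n) (c b a s : ℝ)
    (hc : 0 < c) (ha : a = 1 ∨ a = -1) (hs : s = 1 ∨ s = -1)
    (hb : sgnR b = a * s)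
    (hg : ∀ u ∈ U, f (g u) = c * f u + b * e u)
    (hUe : covL U e = a) (hUf : covL U f = s) :
    covL (U.map g) f = s := by
  have hsne : s ≠ 0 := by rcases hs with h | h <;> rw [h] <;> norm_num
  induction U with
  | nil => exact absurd hUf.symm (by simpa using hsne)
  | cons u U ih =>
    have hgu := hg u (List.mem_cons_self)
    have ih' := ih fun u hu => hg u (List.mem_cons_of_mem _ hu)
    by_cases hfu : f u = 0 <;> by_cases heu : e u = 0
    · rw [covL_cons_eq _ _ _ hfu] at hUf
      rw [covL_cons_eq _ _ _ heu] at hUe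
      rw [List.map_cons, covL_cons_eq _ _ _ (by rw [hgu, hfu, heu]; ring), ih' hUe hUf]
    · rw [covL_cons_ne _ _ _ heu] at hUe
      have hbne : b ≠ 0 := by
        intro h0
        rw [h0, sgnR_zero] at hb
        rcases ha with h1 | h1 <;> rcases hs with h2 | h2 <;> rw [h1, h2] at hb <;>
          norm_num at hb
      have hval : f (g u) = b * e u := by rw [hgu, hfu]; ring
      rw [List.map_cons, covL_cons_ne _ _ _ (by rw [hval]; exact mul_ne_zero hbne heu),
        hval, sgnR_mul, hb, hUe]
      rcases ha with h1 | h1 <;> rw [h1] <;> ring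
    · rw [covL_cons_ne _ _ _ hfu] at hUf
      have hval : f (g u) = c * f u := by rw [hgu, heu]; ring
      rw [List.map_cons, covL_cons_ne _ _ _ (by rw [hval]; exact mul_ne_zero (ne_of_gt hc) hfu),
        hval, sgnR_mul, sgnR_eq_one_iff.2 hc, one_mul, hUf]
    · rw [covL_cons_ne _ _ _ hfu] at hUf
      rw [covL_cons_ne _ _ _ heu] at hUe
      have h1 : sgnR (c * f u) = s := by rw [sgnR_mul, sgnR_eq_one_iff.2 hc, one_mul, hUf]
      have h2 : sgnR (b * e u) = s := by
        rw [sgnR_mul, hb, hUe]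
        rcases ha with h | h <;> rw [h] <;> ring
      have h3 : sgnR (f (g u)) = s := by rw [hgu]; exact sgnR_add_same hs h1 h2
      rw [List.map_cons, covL_cons_ne _ _ _ ?_, h3]
      intro h0
      rw [h0, sgnR_zero] at h3
      exact hsne h3.symm

def blkL (a : ℝ) (e : Dr n) (w : Vr n) (U : List (Vr n)) : List (Vr n) :=
  U.map fun u => ((-a) * e w) • u + (a * e u) • w

def ZL (a : ℝ) (e : Dr n) (U : List (Vr n)) : List (Vr n) → List (Vr n)
  | [] => []
  | w :: W => blkL a e w U ++ ZL a e U W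

lemma f_blk (f e : Dr n) (a : ℝ) (w u : Vr n) :
    f (((-a) * e w) • u + (a * e u) • w) = ((-a) * e w) * f u + (a * e u) * f w := by
  simp [map_add, map_smul, smul_eq_mul]

lemma claim2 (f e : Dr n) (U : List (Vr n)) (a : ℝ) (ha : a = 1 ∨ a = -1)
    (hUe : covL U e = a) (hU0 : ∀ u ∈ U, f u = 0) :
    ∀ W : List (Vr n), covL (ZL a e U W) f = covL W f := by
  intro W
  induction W with
  | nil => rfl
  | cons w W ih =>
    have hblk : covL (blkL a e w U) f = sgnR (f w) := by
      rw [blkL, covL_map_eval f e U (a * f w) _ ?_, hUe]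
      · rw [sgnR_mul, sgnR_of_pm ha]
        rcases ha with h | h <;> rw [h] <;> ring
      · intro u hu
        rw [f_blk, hU0 u hu]; ring
    show covL (blkL a e w U ++ ZL a e U W) f = _
    by_cases hfw : f w = 0
    · rw [covL_append, hblk, if_neg (by simp [hfw]), ih, covL_cons_eq _ _ _ hfw]
    · rw [covL_append, hblk, if_pos (by rwa [Ne, sgnR_eq_zero_iff]), covL_cons_ne _ _ _ hfw]

lemma claim_main (f e : Dr n) (U : List (Vr n)) (a : ℝ) (ha : a = 1 ∨ a = -1)
    (hUe : covL U e = a) :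
    ∀ W : List (Vr n), covL W e = -a →
      ¬(covL U f ≠ 0 ∧ covL U f = -covL W f) →
      covL (ZL a e U W) f = scomp (covL U) (covL W) f := by
  intro W
  induction W with
  | nil =>
    intro hWe _
    exfalso
    rcases ha with h | h <;> rw [h] at hWe <;> simp at hWe
  | cons w W ih =>
    intro hWe hsep
    by_cases hXf : covL U f = 0
    · rw [claim2 f e U a ha hUe ((covL_eq_zero_iff U f).1 hXf) (w :: W)]
      simp [scomp, hXf]
    have hs : covL U f = 1 ∨ covL U f = -1 := by
      rcases covL_values U f with h | h | h
      · exact absurd h hXf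
      · exact Or.inl h
      · exact Or.inr h
    by_cases hew : e w = 0
    · have hWe' : covL W e = -a := by rwa [covL_cons_eq _ _ _ hew] at hWe
      by_cases hfw : f w = 0
      · -- C1
        have hYY : covL (w :: W) f = covL W f := covL_cons_eq _ _ _ hfw
        have hblk : covL (blkL a e w U) f = 0 := by
          rw [covL_eq_zero_iff]
          intro z hz
          obtain ⟨u, _, rfl⟩ := List.mem_map.1 hz
          rw [f_blk, hew, hfw]; ring
        show covL (blkL a e w U ++ ZL a e U W) f = _
        rw [covL_append, hblk, if_neg (by simp)]
        rw [show scomp (covL U) (covL (w :: W)) f = scomp (covL U) (covL W) f from by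
          simp [scomp, hYY]]
        exact ih hWe' (by rwa [hYY] at hsep)
      · -- C2
        have hY : covL (w :: W) f = sgnR (f w) := covL_cons_ne _ _ _ hfw
        have hblk : covL (blkL a e w U) f = sgnR (f w) := by
          rw [blkL, covL_map_eval f e U (a * f w) _ ?_, hUe]
          · rw [sgnR_mul, sgnR_of_pm ha]
            rcases ha with h | h <;> rw [h] <;> ring
          · intro u hu
            rw [f_blk, hew]; ring
        show covL (blkL a e w U ++ ZL a e U W) f = _
        rw [covL_append, hblk, if_pos (by rwa [Ne, sgnR_eq_zero_iff])]
        have h1 : covL U f ≠ -covL (w :: W) f := fun h => hsep ⟨hXf, h⟩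
        rw [hY] at h1
        have h2 : covL U f = sgnR (f w) :=
          pm_eq_of_ne_neg hs (sgnR_pm_of_ne hfw) h1
        have hsc : scomp (covL U) (covL (w :: W)) f = covL U f := if_pos hXf
        rw [hsc, h2]
    · -- C3 : e w ≠ 0
      have hsw : sgnR (e w) = -a := by rwa [covL_cons_ne _ _ _ hew] at hWe
      have hc : 0 < (-a) * e w := by
        rcases ha with h | h <;> rw [h] at hsw ⊢
        · rw [sgnR_eq_neg_one_iff] at hsw; nlinarith
        · rw [show -(-1 : ℝ) = 1 by norm_num] at hsw ⊢
          rw [sgnR_eq_one_iff] at hsw; nlinarith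
      by_cases hfw : f w = 0
      · -- C3a
        have hblk : covL (blkL a e w U) f = covL U f := by
          rw [blkL, covL_map_const f U ((-a) * e w) _ ?_, sgnR_eq_one_iff.2 hc, one_mul]
          intro u hu
          rw [f_blk, hfw]; ring
        show covL (blkL a e w U ++ ZL a e U W) f = _
        rw [covL_append, hblk, if_pos hXf]
        exact (if_pos hXf).symm
      · -- C3b
        have hY : covL (w :: W) f = sgnR (f w) := covL_cons_ne _ _ _ hfw
        have h1 : covL U f ≠ -covL (w :: W) f := fun h => hsep ⟨hXf, h⟩
        rw [hY] at h1
        have h2 : covL U f = sgnR (f w) :=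
          pm_eq_of_ne_neg hs (sgnR_pm_of_ne hfw) h1
        have hb : sgnR (a * f w) = a * covL U f := by
          rw [sgnR_mul, sgnR_of_pm ha, h2]
        have hblk : covL (blkL a e w U) f = covL U f := by
          refine covL_map_mix f e U _ ((-a) * e w) (a * f w) a (covL U f) hc ha hs hb ?_ hUe rfl
          intro u hu
          rw [f_blk]; ring
        show covL (blkL a e w U ++ ZL a e U W) f = _
        rw [covL_append, hblk, if_pos hXf]
        exact (if_pos hXf).symm

lemma ZL_eval_zero (e : Dr n) (a : ℝ) (U : List (Vr n)) :
    ∀ (W : List (Vr n)) (z : Vr n), z ∈ ZL a e U W → e z = 0 := by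
  intro W
  induction W with
  | nil => intro z hz; exact absurd hz List.not_mem_nil
  | cons w W ih =>
    intro z hz
    rcases List.mem_append.1 hz with hz | hz
    · obtain ⟨u, _, rfl⟩ := List.mem_map.1 hz
      rw [f_blk]; ring
    · exact ih z hz

/-- Covector elimination holds for the covectors of the universal realizable
oriented matroid `M_univ` on `(ℝ^{n+1})^*`. -/
theorem covector_elimination_Muniv (n : ℕ)
    (X Y : Module.Dual ℝ (Fin (n + 1) → ℝ) → ℝ)
    (hX : IsCovector (phiUniv n) X) (hY : IsCovector (phiUniv n) Y)
    (e : Module.Dual ℝ (Fin (n + 1) → ℝ)) (he0 : X e ≠ 0) (he : X e = -Y e) :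
    ∃ Z : Module.Dual ℝ (Fin (n + 1) → ℝ) → ℝ, IsCovector (phiUniv n) Z ∧ Z e = 0 ∧
      ∀ e', ¬(X e' ≠ 0 ∧ X e' = -Y e') → Z e' = scomp X Y e' := by
  obtain ⟨U, hU⟩ := covector_repr hX
  obtain ⟨W, hW⟩ := covector_repr hY
  subst hU; subst hW
  have ha : covL U e = 1 ∨ covL U e = -1 := by
    rcases covL_values U e with h | h | h
    · exact absurd h he0
    · exact Or.inl h
    · exact Or.inr h
  have hWe : covL W e = -(covL U e) := by linarith [he]
  refine ⟨covL (ZL (covL U e) e U W), covector_covL _, ?_, ?_⟩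
  · rw [covL_eq_zero_iff]
    exact fun z hz => ZL_eval_zero e (covL U e) U W z hz
  · intro e' hsep
    exact claim_main e' e U (covL U e) ha rfl W hWe hsep
end
end
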